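/- Let {Y_j}_{j≥0} and {Z_j}_{j≥0} be sequences of positive numbers satisfying Y_{j+1} ≤ K b^j (Y_j^{1+δ} + Z_j^{1+κ} Y_j^δ) and Z_{j+1} ≤ K b^j (Y_j + Z_j^{1+κ}) for all j ≥ 0, where K, b > 1 and δ, κ > 0. If Y_0 + Z_0^{1+κ} ≤ (2K)^{−(1+κ)/σ} · b^{−(1+κ)/σ²}, where σ = min{κ, δ}, then Y_j → 0 and Z_j → 0 as j → ∞. -/

import Mathlib

open Filter Real

/-- DiBenedetto's coupled fast-geometric-convergence lemma. -/
theorem stmt_4 (K b δ κ : ℝ) (hK : 1 < K) (hb : 1 < b) (hδ : 0 < δ) (hκ : 0 < κ)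
    (Y Z : ℕ → ℝ) (hY : ∀ j, 0 < Y j) (hZ : ∀ j, 0 < Z j)
    (hrecY : ∀ j, Y (j + 1) ≤ K * b ^ j * (Y j ^ (1 + δ) + Z j ^ (1 + κ) * Y j ^ δ))
    (hrecZ : ∀ j, Z (j + 1) ≤ K * b ^ j * (Y j + Z j ^ (1 + κ)))
    (hinit : Y 0 + Z 0 ^ (1 + κ) ≤
      (2 * K) ^ (-(1 + κ) / min κ δ) * b ^ (-(1 + κ) / (min κ δ) ^ 2)) :
    Filter.Tendsto Y Filter.atTop (nhds 0) ∧ Filter.Tendsto Z Filter.atTop (nhds 0) := by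
  have hb0 : (0:ℝ) < b := lt_trans one_pos hb
  have hK0 : (0:ℝ) < K := lt_trans one_pos hK
  have h2K : (1:ℝ) ≤ 2 * K := by linarith
  set σ := min κ δ with hσdef
  have hσ : 0 < σ := lt_min hκ hδ
  have hσκ : σ ≤ κ := min_le_left _ _
  have hσδ : σ ≤ δ := min_le_right _ _
  set α := (1 + κ) / σ with hαdef
  have hα : 0 < α := div_pos (by linarith) hσ
  have hασ : α * σ = 1 + κ := div_mul_cancel₀ _ (ne_of_gt hσ)
  set W : ℕ → ℝ := fun j => Y j + Z j ^ (1 + κ) with hWdef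
  have hWpos : ∀ j, 0 < W j := fun j => add_pos (hY j) (Real.rpow_pos_of_pos (hZ j) _)
  -- rewrite the initial hypothesis
  have hinit' : W 0 ≤ (2 * K) ^ (-α) * b ^ (-α / σ) := by
    have e1 : -α = -(1 + κ) / σ := by rw [hαdef]; ring
    have e2 : -α / σ = -(1 + κ) / σ ^ 2 := by rw [hαdef]; ring
    rw [e2, e1]; exact hinit
  have hW0le : W 0 ≤ 1 := by
    have h1 : (2 * K) ^ (-α) ≤ 1 :=
      Real.rpow_le_one_of_one_le_of_nonpos h2K (by linarith)
    have h2 : b ^ (-α / σ) ≤ 1 :=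
      Real.rpow_le_one_of_one_le_of_nonpos hb.le
        (div_nonpos_of_nonpos_of_nonneg (by linarith) hσ.le)
    refine hinit'.trans ?_
    calc (2 * K) ^ (-α) * b ^ (-α / σ) ≤ 1 * 1 := by
          apply mul_le_mul h1 h2 (Real.rpow_pos_of_pos hb0 _).le zero_le_one
      _ = 1 := by norm_num
  -- the key smallness fact
  have hWσ : (W 0) ^ σ ≤ (2 * K) ^ (-(1 + κ)) * b ^ (-α) := by
    calc (W 0) ^ σ ≤ ((2 * K) ^ (-α) * b ^ (-α / σ)) ^ σ :=
          Real.rpow_le_rpow (hWpos 0).le hinit' hσ.le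
      _ = (2 * K) ^ (-(1 + κ)) * b ^ (-α) := by
          rw [Real.mul_rpow (Real.rpow_pos_of_pos (by linarith) _).le
              (Real.rpow_pos_of_pos hb0 _).le,
            ← Real.rpow_mul (by linarith : (0:ℝ) ≤ 2 * K), ← Real.rpow_mul hb0.le]
          congr 1
          · congr 1; rw [neg_mul, hασ]
          · congr 1; field_simp
  have hkey : 2 * K ^ (1 + κ) * (W 0) ^ σ * b ^ α ≤ 1 := by
    have hmono : 2 * K ^ (1 + κ) * (W 0) ^ σ * b ^ α
        ≤ 2 * K ^ (1 + κ) * ((2 * K) ^ (-(1 + κ)) * b ^ (-α)) * b ^ α := by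
      have h1 : (0:ℝ) ≤ 2 * K ^ (1 + κ) := by positivity
      have h2 : (0:ℝ) ≤ b ^ α := (Real.rpow_pos_of_pos hb0 _).le
      nlinarith [hWσ, mul_nonneg h1 h2]
    have hKne : K ^ (1 + κ) ≠ 0 := (Real.rpow_pos_of_pos hK0 _).ne'
    have hbne : b ^ α ≠ 0 := (Real.rpow_pos_of_pos hb0 _).ne'
    have h2pos : (0:ℝ) < (2:ℝ) ^ (1 + κ) := Real.rpow_pos_of_pos two_pos _
    have hcalc : 2 * K ^ (1 + κ) * ((2 * K) ^ (-(1 + κ)) * b ^ (-α)) * b ^ α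
        = 2 * ((2:ℝ) ^ (1 + κ))⁻¹ := by
      rw [Real.mul_rpow (by norm_num : (0:ℝ) ≤ 2) hK0.le,
        Real.rpow_neg (by norm_num : (0:ℝ) ≤ 2), Real.rpow_neg hK0.le,
        Real.rpow_neg hb0.le]
      field_simp
    have h2le : (2:ℝ) ≤ (2:ℝ) ^ (1 + κ) := by
      have : (2:ℝ) ^ (1:ℝ) ≤ (2:ℝ) ^ (1 + κ) :=
        Real.rpow_le_rpow_of_exponent_le (by norm_num) (by linarith)
      rwa [Real.rpow_one] at this
    calc 2 * K ^ (1 + κ) * (W 0) ^ σ * b ^ α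
        ≤ 2 * ((2:ℝ) ^ (1 + κ))⁻¹ := by rw [← hcalc]; exact hmono
      _ ≤ (2:ℝ) ^ (1 + κ) * ((2:ℝ) ^ (1 + κ))⁻¹ := by gcongr
      _ = 1 := mul_inv_cancel₀ h2pos.ne'
  -- main induction
  have hmain : ∀ j : ℕ, W j ≤ W 0 * b ^ (-α * (j:ℝ)) := by
    intro j
    induction j with
    | zero => simp
    | succ j ih =>
      have hBj : b ^ (-α * (j:ℝ)) ≤ 1 := by
        apply Real.rpow_le_one_of_one_le_of_nonpos hb.le
        have := mul_nonneg hα.le (Nat.cast_nonneg (α := ℝ) j)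
        linarith
      have hWj1 : W j ≤ 1 := by
        refine ih.trans ?_
        calc W 0 * b ^ (-α * (j:ℝ)) ≤ 1 * 1 :=
              mul_le_mul hW0le hBj (Real.rpow_pos_of_pos hb0 _).le zero_le_one
          _ = 1 := by norm_num
      have hbj1 : (1:ℝ) ≤ b ^ j := one_le_pow₀ hb.le
      have hKbj1 : (1:ℝ) ≤ K * b ^ j := by nlinarith
      have hKbj0 : (0:ℝ) ≤ K * b ^ j := by linarith
      -- Y bound
      have hYb : Y (j + 1) ≤ (K * b ^ j) * W j ^ (1 + δ) := by
        calc Y (j + 1) ≤ K * b ^ j * (Y j ^ (1 + δ) + Z j ^ (1 + κ) * Y j ^ δ) := hrecY j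
          _ = K * b ^ j * (Y j ^ δ * W j) := by
              rw [Real.rpow_add (hY j) 1 δ, Real.rpow_one]
              show _ = K * b ^ j * (Y j ^ δ * (Y j + Z j ^ (1 + κ)))
              ring
          _ ≤ K * b ^ j * (W j ^ δ * W j) := by
              have hle : Y j ^ δ ≤ W j ^ δ := by
                apply Real.rpow_le_rpow (hY j).le _ hδ.le
                exact le_add_of_nonneg_right (Real.rpow_pos_of_pos (hZ j) _).le
              have := mul_le_mul_of_nonneg_right hle (hWpos j).le
              nlinarith [hWpos j]
          _ = (K * b ^ j) * W j ^ (1 + δ) := by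
              rw [Real.rpow_add (hWpos j) 1 δ, Real.rpow_one]; ring
      -- Z bound
      have hZb : Z (j + 1) ^ (1 + κ) ≤ (K * b ^ j) ^ ((1:ℝ) + κ) * W j ^ (1 + κ) := by
        calc Z (j + 1) ^ (1 + κ) ≤ (K * b ^ j * W j) ^ (1 + κ) :=
              Real.rpow_le_rpow (hZ (j + 1)).le (hrecZ j) (by linarith)
          _ = _ := Real.mul_rpow (mul_nonneg hK0.le (pow_nonneg hb0.le j)) (hWpos j).le
      have hstep : W (j + 1) ≤ 2 * (K * b ^ j) ^ ((1:ℝ) + κ) * W j ^ (1 + σ) := by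
        have hKb' : K * b ^ j ≤ (K * b ^ j) ^ ((1:ℝ) + κ) := by
          calc K * b ^ j = (K * b ^ j) ^ (1:ℝ) := (Real.rpow_one _).symm
            _ ≤ _ := Real.rpow_le_rpow_of_exponent_le hKbj1 (by linarith)
        have hWδ : W j ^ (1 + δ) ≤ W j ^ (1 + σ) :=
          Real.rpow_le_rpow_of_exponent_ge (hWpos j) hWj1 (by linarith)
        have hWκ : W j ^ (1 + κ) ≤ W j ^ (1 + σ) :=
          Real.rpow_le_rpow_of_exponent_ge (hWpos j) hWj1 (by linarith)
        have hKbκ0 : (0:ℝ) ≤ (K * b ^ j) ^ ((1:ℝ) + κ) :=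
          Real.rpow_nonneg hKbj0 _
        calc W (j + 1) = Y (j + 1) + Z (j + 1) ^ (1 + κ) := rfl
          _ ≤ (K * b ^ j) * W j ^ (1 + δ) + (K * b ^ j) ^ ((1:ℝ) + κ) * W j ^ (1 + κ) :=
              add_le_add hYb hZb
          _ ≤ (K * b ^ j) ^ ((1:ℝ) + κ) * W j ^ (1 + σ)
              + (K * b ^ j) ^ ((1:ℝ) + κ) * W j ^ (1 + σ) := by
              refine add_le_add ?_ ?_
              · exact mul_le_mul hKb' hWδ (Real.rpow_nonneg (hWpos j).le _) hKbκ0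
              · exact mul_le_mul_of_nonneg_left hWκ hKbκ0
          _ = 2 * (K * b ^ j) ^ ((1:ℝ) + κ) * W j ^ (1 + σ) := by ring
      have hWσ' : W j ^ (1 + σ) ≤ (W 0 * b ^ (-α * (j:ℝ))) ^ (1 + σ) :=
        Real.rpow_le_rpow (hWpos j).le ih (by linarith)
      have hbcomb : b ^ ((j:ℝ) * (1 + κ)) * b ^ (-α * (j:ℝ) * (1 + σ))
          = b ^ α * b ^ (-α * ((j:ℝ) + 1)) := by
        rw [← Real.rpow_add hb0, ← Real.rpow_add hb0]
        congr 1
        rw [← hασ]; ring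
      have heq : 2 * (K * b ^ j) ^ ((1:ℝ) + κ) * (W 0 * b ^ (-α * (j:ℝ))) ^ (1 + σ)
          = (2 * K ^ (1 + κ) * (W 0) ^ σ * b ^ α) * (W 0 * b ^ (-α * ((j:ℝ) + 1))) := by
        rw [Real.mul_rpow hK0.le (pow_nonneg hb0.le j),
          Real.mul_rpow (hWpos 0).le (Real.rpow_pos_of_pos hb0 _).le,
          ← Real.rpow_natCast b j, ← Real.rpow_mul hb0.le, ← Real.rpow_mul hb0.le,
          Real.rpow_add (hWpos 0) 1 σ, Real.rpow_one]
        linear_combination (2 * K ^ (1 + κ) * (W 0 * (W 0) ^ σ)) * hbcomb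
      have hcast : (-α * (((j:ℕ) + 1 : ℕ) : ℝ)) = -α * ((j:ℝ) + 1) := by push_cast; ring
      calc W (j + 1) ≤ 2 * (K * b ^ j) ^ ((1:ℝ) + κ) * (W 0 * b ^ (-α * (j:ℝ))) ^ (1 + σ) := by
            refine hstep.trans ?_
            exact mul_le_mul_of_nonneg_left hWσ' (by positivity)
        _ = (2 * K ^ (1 + κ) * (W 0) ^ σ * b ^ α) * (W 0 * b ^ (-α * ((j:ℝ) + 1))) := heq
        _ ≤ 1 * (W 0 * b ^ (-α * ((j:ℝ) + 1))) := by
            exact mul_le_mul_of_nonneg_right hkey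
              (mul_nonneg (hWpos 0).le (Real.rpow_pos_of_pos hb0 _).le)
        _ = W 0 * b ^ (-α * (((j + 1 : ℕ)) : ℝ)) := by rw [one_mul, hcast]
  -- conclusion: geometric decay
  have hr1 : b ^ (-α) < 1 := Real.rpow_lt_one_of_one_lt_of_neg hb (by linarith)
  have hr0 : (0:ℝ) ≤ b ^ (-α) := (Real.rpow_pos_of_pos hb0 _).le
  have hgeo : Filter.Tendsto (fun j : ℕ => W 0 * (b ^ (-α)) ^ j) Filter.atTop (nhds 0) := by
    have := tendsto_pow_atTop_nhds_zero_of_lt_one hr0 hr1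
    simpa using this.const_mul (W 0)
  have hbound : ∀ j : ℕ, W j ≤ W 0 * (b ^ (-α)) ^ j := by
    intro j
    refine (hmain j).trans_eq ?_
    congr 1
    rw [← Real.rpow_natCast (b ^ (-α)) j, ← Real.rpow_mul hb0.le]
  have hWt : Filter.Tendsto W Filter.atTop (nhds 0) :=
    squeeze_zero (fun j => (hWpos j).le) hbound hgeo
  constructor
  · refine squeeze_zero (fun j => (hY j).le) (fun j => ?_) hWt
    exact le_add_of_nonneg_right (Real.rpow_pos_of_pos (hZ j) _).le
  · have hZκt : Filter.Tendsto (fun j => Z j ^ (1 + κ)) Filter.atTop (nhds 0) := by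
      refine squeeze_zero (fun j => (Real.rpow_pos_of_pos (hZ j) _).le) (fun j => ?_) hWt
      exact le_add_of_nonneg_left (hY j).le
    have h1κ : (0:ℝ) < 1 + κ := by linarith
    have ht := hZκt.rpow_const (p := 1 / (1 + κ)) (Or.inr (by positivity))
    rw [Real.zero_rpow (by positivity : (1:ℝ) / (1 + κ) ≠ 0)] at ht
    refine ht.congr fun j => ?_
    rw [← Real.rpow_mul (hZ j).le]
    rw [mul_one_div_cancel h1κ.ne', Real.rpow_one]
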